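/- Let A be an n × n real matrix, c = (1,…,1), and x(t) = e^{tA} c. Fix k, and let A^{(k)} be the matrix obtained from A by setting to zero all entries in row k and column k, with x^{(k)}(t) = e^{tA^{(k)}} c. Then for j ≠ k: x_j(t) = x_j^{(k)}(t) + ∫₀^t ∑_{i ≠ k} (e^{(t−s)A^{(k)}})_{ji} A_{ik} x_k(s) ds. -/

import Mathlib

open Matrix Finset

section Aux

lemma aux_pow_col_zero {n : ℕ} (M : Matrix (Fin n) (Fin n) ℝ) (k : Fin n)
    (hM : ∀ i, M i k = 0) {j : Fin n} (hjk : j ≠ k) (m : ℕ) : (M ^ m) j k = 0 := by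
  cases m with
  | zero => simpa using Matrix.one_apply_ne hjk
  | succ m =>
    rw [pow_succ, Matrix.mul_apply]
    simp [hM]

lemma aux_exp_col_zero {n : ℕ} (M : Matrix (Fin n) (Fin n) ℝ) (k : Fin n)
    (hM : ∀ i, M i k = 0) {j : Fin n} (hjk : j ≠ k) : NormedSpace.exp M j k = 0 := by
  letI : SeminormedRing (Matrix (Fin n) (Fin n) ℝ) := Matrix.linftyOpSemiNormedRing
  letI : NormedRing (Matrix (Fin n) (Fin n) ℝ) := Matrix.linftyOpNormedRing
  letI : NormedAlgebra ℝ (Matrix (Fin n) (Fin n) ℝ) := Matrix.linftyOpNormedAlgebra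
  let l : Matrix (Fin n) (Fin n) ℝ →ₗ[ℝ] ℝ :=
    { toFun := fun N => N j k, map_add' := fun _ _ => rfl, map_smul' := fun _ _ => rfl }
  have hc : NormedSpace.exp M j k = l.toContinuousLinearMap (NormedSpace.exp M) := rfl
  rw [hc, NormedSpace.exp_eq_tsum ℝ]
  beta_reduce
  erw [ContinuousLinearMap.map_tsum _ (NormedSpace.expSeries_summable' (𝕂 := ℝ) M)]
  have : (fun m : ℕ => l.toContinuousLinearMap ((m.factorial⁻¹ : ℝ) • M ^ m))
      = fun _ => (0:ℝ) := by
    funext m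
    simp [l, aux_pow_col_zero M k hM hjk m]
    exact Or.inr (aux_pow_col_zero M k hM hjk m)
  exact (congrArg (fun f : ℕ → ℝ => ∑' m, f m) this).trans tsum_zero

end Aux

/-- Variation-of-constants decomposition (formula (repr) of the paper): with
`A^{(k)}` obtained from `A` by zeroing row and column `k`,
`x(t) = e^{tA}𝟙`, `x^{(k)}(t) = e^{tA^{(k)}}𝟙`, one has for `j ≠ k`
`x_j(t) = x_j^{(k)}(t) + ∫₀^t ∑_{i≠k} (e^{(t−s)A^{(k)}})_{ji} A_{ik} x_k(s) ds`. -/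
theorem stmt18 (n : ℕ) (A : Matrix (Fin n) (Fin n) ℝ) (k : Fin n)
    (Ak : Matrix (Fin n) (Fin n) ℝ)
    (hAk : ∀ i j, Ak i j = if i = k ∨ j = k then 0 else A i j)
    (x xk : ℝ → Fin n → ℝ)
    (hx : ∀ t, x t = (NormedSpace.exp (t • A)).mulVec (fun _ => (1:ℝ)))
    (hxk : ∀ t, xk t = (NormedSpace.exp (t • Ak)).mulVec (fun _ => (1:ℝ))) :
    ∀ j : Fin n, j ≠ k → ∀ t : ℝ,
      x t j = xk t j +
        ∫ s in (0:ℝ)..t, ∑ i ∈ Finset.univ.erase k,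
          (NormedSpace.exp ((t - s) • Ak)) j i * A i k * x s k := by
  intro j hjk t
  letI : SeminormedRing (Matrix (Fin n) (Fin n) ℝ) := Matrix.linftyOpSemiNormedRing
  letI : NormedRing (Matrix (Fin n) (Fin n) ℝ) := Matrix.linftyOpNormedRing
  letI : NormedAlgebra ℝ (Matrix (Fin n) (Fin n) ℝ) := Matrix.linftyOpNormedAlgebra
  set c : Fin n → ℝ := fun _ => (1:ℝ) with hc
  let l : Matrix (Fin n) (Fin n) ℝ →ₗ[ℝ] ℝ :=
    { toFun := fun N => (N.mulVec c) j,
      map_add' := by intros; simp [Matrix.add_mulVec],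
      map_smul' := by intros; simp [Matrix.smul_mulVec] }
  -- the function whose derivative we take
  set g : ℝ → ℝ := fun u =>
    ((NormedSpace.exp ((t-u)•Ak) * NormedSpace.exp (u•A)).mulVec c) j with hg
  set D : ℝ → ℝ := fun s =>
    ((NormedSpace.exp ((t-s)•Ak) * (A - Ak) * NormedSpace.exp (s•A)).mulVec c) j with hD
  have hderiv : ∀ s : ℝ, HasDerivAt g (D s) s := by
    intro s
    have h1 : HasDerivAt (fun u : ℝ => NormedSpace.exp ((t-u)•Ak))
        ((-1 : ℝ) • (NormedSpace.exp ((t-s)•Ak) * Ak)) s := by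
      have hb : HasDerivAt (fun u : ℝ => t - u) (-1) s := (hasDerivAt_id s).const_sub t
      exact (hasDerivAt_exp_smul_const Ak (t-s)).scomp s hb |>.congr_deriv
        (by rfl)
    have h2 : HasDerivAt (fun u : ℝ => NormedSpace.exp (u•A))
        (A * NormedSpace.exp (s•A)) s := hasDerivAt_exp_smul_const' A s
    have h4 : HasDerivAt (fun u : ℝ => NormedSpace.exp ((t-u)•Ak) * NormedSpace.exp (u•A))
        (NormedSpace.exp ((t-s)•Ak) * (A - Ak) * NormedSpace.exp (s•A)) s := by
      refine (h1.mul h2).congr_deriv ?_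
      simp only [neg_one_smul, mul_sub, sub_mul, neg_mul, mul_assoc]
      abel
    exact l.toContinuousLinearMap.hasFDerivAt.comp_hasDerivAt s h4
  -- continuity of D
  have hDcont : Continuous D := by
    have hcont : Continuous (fun s : ℝ =>
        NormedSpace.exp ((t-s)•Ak) * (A - Ak) * NormedSpace.exp (s•A)) := by
      apply Continuous.mul
      · apply Continuous.mul
        · exact continuous_iff_continuousAt.2 fun s =>
            (hasDerivAt_exp_smul_const Ak (t-s)).continuousAt.comp (x := s)
              (continuous_const.sub continuous_id).continuousAt
        · exact continuous_const
      · exact continuous_iff_continuousAt.2 fun s => (hasDerivAt_exp_smul_const A s).continuousAt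
    exact l.toContinuousLinearMap.continuous.comp hcont
  have hFTC : ∫ s in (0:ℝ)..t, D s = g t - g 0 :=
    intervalIntegral.integral_eq_sub_of_hasDerivAt (fun s _ => hderiv s)
      (hDcont.intervalIntegrable 0 t)
  -- identify endpoints
  have hgt : g t = x t j := by
    simp [hg, hx t]
  have hg0 : g 0 = xk t j := by
    simp [hg, hxk t]
  -- identify the integrand
  have hint : ∀ s : ℝ, D s = ∑ i ∈ Finset.univ.erase k,
      (NormedSpace.exp ((t - s) • Ak)) j i * A i k * x s k := by
    intro s
    have hxs : (NormedSpace.exp (s•A)).mulVec c = x s := (hx s).symm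
    have hDs : D s = ((NormedSpace.exp ((t-s)•Ak)).mulVec ((A - Ak).mulVec (x s))) j := by
      simp only [hD]
      rw [← Matrix.mulVec_mulVec, hxs, ← Matrix.mulVec_mulVec]
    rw [hDs]
    simp only [Matrix.mulVec, dotProduct]
    rw [← Finset.sum_erase_add _ _ (Finset.mem_univ k)]
    have hEjk : (NormedSpace.exp ((t-s)•Ak)) j k = 0 := by
      refine aux_exp_col_zero _ k (fun i => ?_) hjk
      simp [hAk i k]
    rw [hEjk, zero_mul, add_zero]
    refine Finset.sum_congr rfl fun i hi => ?_
    have hik : i ≠ k := Finset.ne_of_mem_erase hi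
    have hw : (∑ l : Fin n, (A - Ak) i l * x s l) = A i k * x s k := by
      rw [Finset.sum_eq_single k]
      · simp [Matrix.sub_apply, hAk i k]
      · intro l _ hlk
        simp [Matrix.sub_apply, hAk i l, hik, hlk]
      · simp
    rw [hw, mul_assoc]
  have : ∫ s in (0:ℝ)..t, D s = ∫ s in (0:ℝ)..t, ∑ i ∈ Finset.univ.erase k,
      (NormedSpace.exp ((t - s) • Ak)) j i * A i k * x s k := by
    exact intervalIntegral.integral_congr fun s _ => hint s
  rw [← this, hFTC, hgt, hg0]
  ring
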